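/- For n ≥ 1, the number of plane trees with n edges and k old leaves is (2^(n-2k+1)/k)·C(n-1,2k-2)·C(2k-2,k-1). -/

import Mathlib

/-- A plane tree: a root together with an ordered (possibly empty) list of subtrees. -/
inductive PlaneTree where
  | node : List PlaneTree → PlaneTree

namespace PlaneTree

/-- The number of edges of a plane tree. -/
def edges : PlaneTree → ℕ
  | node ts => (ts.attach.map (fun t => edges t.1 + 1)).sum
decreasing_by have := List.sizeOf_lt_of_mem t.2; simp at *; omega

/-- Indicator that a tree is a single vertex (i.e. the corresponding child is a leaf). -/
def isLeafInd : PlaneTree → ℕ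
  | node [] => 1
  | node (_ :: _) => 0

/-- The number of old leaves: leaves that are the leftmost child of their parent. -/
def oldLeaves : PlaneTree → ℕ
  | node [] => 0
  | node (t :: ts) =>
      isLeafInd t + oldLeaves t + (ts.attach.map (fun s => oldLeaves s.1)).sum
decreasing_by
  · simp; omega
  · have := List.sizeOf_lt_of_mem s.2; simp at *; omega

/-- The number of young leaves: leaves that are not the leftmost child of their parent. -/
def youngLeaves : PlaneTree → ℕ
  | node [] => 0
  | node (t :: ts) =>
      youngLeaves t + (ts.attach.map (fun s => isLeafInd s.1 + youngLeaves s.1)).sum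
decreasing_by
  · simp; omega
  · have := List.sizeOf_lt_of_mem s.2; simp at *; omega

end PlaneTree

open Finset


def anum (n k : ℕ) : ℕ :=
  if n = 0 then (if k = 0 then 1 else 0)
  else if k = 0 then 0
  else 2^(n+1-2*k) * Nat.choose (n-1) (2*k-2) * catalan (k-1)

theorem anum_zero (k : ℕ) : anum 0 k = if k = 0 then 1 else 0 := by rw [anum]; simp

theorem anum_right_zero (n : ℕ) : anum n 0 = if n = 0 then 1 else 0 := by
  rw [anum]
  rcases eq_or_ne n 0 with rfl | h
  · simp
  · simp [h]

theorem anum_pos (n k : ℕ) (hn : n ≠ 0) (hk : k ≠ 0) :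
    anum n k = 2^(n+1-2*k) * Nat.choose (n-1) (2*k-2) * catalan (k-1) := by
  rw [anum]; simp [hn, hk]

theorem hockey (m r : ℕ) : ∑ i ∈ range (m+1), Nat.choose i r = Nat.choose (m+1) (r+1) := by
  induction m with
  | zero =>
    rcases eq_or_ne r 0 with rfl | h
    · simp
    · simp [Nat.choose_eq_zero_of_lt (by omega : 0 < r), Nat.choose_eq_zero_of_lt (by omega : 1 < r+1)]
  | succ m ih =>
    rw [Finset.sum_range_succ, ih, Nat.choose_succ_succ' (m+1) r]
    omega

theorem vand (m : ℕ) : ∀ r s : ℕ, ∑ i ∈ range (m+1), Nat.choose i r * Nat.choose (m-i) s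
    = Nat.choose (m+1) (r+s+1) := by
  induction m with
  | zero =>
    intro r s
    rcases eq_or_ne r 0 with rfl | hr
    · rcases eq_or_ne s 0 with rfl | hs
      · simp
      · simp [Nat.choose_eq_zero_of_lt (by omega : 0 < s),
          Nat.choose_eq_zero_of_lt (by omega : 1 < s+1)]
    · simp [Nat.choose_eq_zero_of_lt (show 0 < r by omega),
        Nat.choose_eq_zero_of_lt (show 1 < r+s+1 by omega)]
  | succ m ih =>
    intro r s
    rcases Nat.eq_zero_or_pos s with rfl | hs
    · simp only [Nat.choose_zero_right, mul_one]
      rw [hockey (m+1) r, add_zero]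
    · obtain ⟨s', rfl⟩ : ∃ s', s = s' + 1 := ⟨s - 1, by omega⟩
      rw [Finset.sum_range_succ]
      have hlast : Nat.choose (m+1-(m+1)) (s'+1) = 0 := by
        simp [Nat.choose_eq_zero_of_lt]
      rw [hlast, mul_zero, add_zero]
      have hstep : ∀ i ∈ range (m+1), Nat.choose i r * Nat.choose (m+1-i) (s'+1)
          = Nat.choose i r * Nat.choose (m-i) s' + Nat.choose i r * Nat.choose (m-i) (s'+1) := by
        intro i hi
        rw [Finset.mem_range] at hi
        have : m + 1 - i = (m - i) + 1 := by omega
        rw [this, Nat.choose_succ_succ' (m-i) s', Nat.mul_add]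
      rw [Finset.sum_congr rfl hstep, Finset.sum_add_distrib, ih r s', ih r (s'+1)]
      rw [show r + (s'+1) + 1 = (r + s' + 1) + 1 by omega,
        Nat.choose_succ_succ' (m+1) (r+s'+1)]

theorem convA (p q n : ℕ) (hp : 1 ≤ p) (hq : 1 ≤ q) (hn : 1 ≤ n) :
    ∑ i ∈ range (n+1), anum i p * anum (n-i) q
      = (2^(n+2-2*(p+q)) * Nat.choose (n-1) (2*(p+q)-3)) * (catalan (p-1) * catalan (q-1)) := by
  obtain ⟨m, rfl⟩ : ∃ m, n = m + 1 := ⟨n - 1, by omega⟩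
  rw [Finset.sum_range_succ']
  have h0 : anum 0 p * anum (m+1-0) q = 0 := by
    rw [anum_zero, if_neg (by omega)]
    ring
  rw [h0, add_zero, Finset.sum_range_succ]
  have hlast : anum (m+1) p * anum (m+1-(m+1)) q = 0 := by
    rw [Nat.sub_self, anum_zero, if_neg (by omega)]
    ring
  rw [hlast, add_zero]
  have hterm : ∀ i ∈ range m, anum (i+1) p * anum (m+1-(i+1)) q
      = (2^(m+3-2*(p+q)) * (catalan (p-1) * catalan (q-1)))
          * (Nat.choose i (2*p-2) * Nat.choose (m-1-i) (2*q-2)) := by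
    intro i hi
    rw [Finset.mem_range] at hi
    rw [show m+1-(i+1) = m-i by omega]
    rw [anum_pos _ _ (by omega) (by omega), anum_pos _ _ (by omega) (by omega)]
    rw [show i+1-1 = i by omega, show m-i-1 = m-1-i by omega]
    by_cases h1 : 2*p-2 ≤ i
    · by_cases h2 : 2*q-2 ≤ m-1-i
      · rw [show i+1+1-2*p = i+2-2*p by omega]
        rw [show 2^(i+2-2*p) * Nat.choose i (2*p-2) * catalan (p-1)
            * (2^(m-i+1-2*q) * Nat.choose (m-1-i) (2*q-2) * catalan (q-1))
            = (2^(i+2-2*p) * 2^(m-i+1-2*q)) * (catalan (p-1) * catalan (q-1))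
              * (Nat.choose i (2*p-2) * Nat.choose (m-1-i) (2*q-2)) by ring]
        rw [← pow_add]
        rw [show i+2-2*p + (m-i+1-2*q) = m+3-2*(p+q) by omega]
      · rw [Nat.choose_eq_zero_of_lt (show m-1-i < 2*q-2 by omega)]
        ring
    · rw [Nat.choose_eq_zero_of_lt (show i < 2*p-2 by omega)]
      ring
  rw [Finset.sum_congr rfl hterm, ← Finset.mul_sum]
  rcases Nat.eq_zero_or_pos m with rfl | hm
  · simp [Nat.choose_eq_zero_of_lt (show 0 < 2*(p+q)-3 by omega)]
  · obtain ⟨m', rfl⟩ : ∃ m', m = m' + 1 := ⟨m - 1, by omega⟩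
    have hc : ∀ i ∈ range (m'+1), Nat.choose i (2*p-2) * Nat.choose (m'+1-1-i) (2*q-2)
        = Nat.choose i (2*p-2) * Nat.choose (m'-i) (2*q-2) := by
      intro i hi
      rw [show m'+1-1-i = m'-i by omega]
    rw [Finset.sum_congr rfl hc, vand m' (2*p-2) (2*q-2)]
    rw [show 2*p-2+(2*q-2)+1 = 2*(p+q)-3 by omega, show m'+1+1-1 = m'+1 by omega]
    rw [show m'+1+1+2-2*(p+q) = m'+1+3-2*(p+q) by omega]
    ring

theorem sum_left_ind (n t : ℕ) :
    ∑ i ∈ range (n+1), anum i 0 * anum (n-i) t = anum n t := by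
  rw [Finset.sum_eq_single_of_mem 0 (Finset.mem_range.2 (by omega))]
  · rw [anum_zero]
    simp
  · intro i _ hi
    rw [anum_right_zero, if_neg hi]
    ring

theorem sum_right_ind (n t : ℕ) :
    ∑ i ∈ range (n+1), anum i t * anum (n-i) 0 = anum n t := by
  rw [Finset.sum_eq_single_of_mem n (Finset.mem_range.2 (by omega))]
  · rw [Nat.sub_self, anum_zero]
    simp
  · intro i hi hin
    rw [Finset.mem_range] at hi
    rw [anum_right_zero, if_neg (show ¬ n - i = 0 by omega)]
    ring

theorem final_arith (n k : ℕ) (hn : 1 ≤ n) (hk : 2 ≤ k) :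
    anum n k + (2^(n+2-2*k) * Nat.choose (n-1) (2*k-3) * catalan (k-1) + anum n k)
      = anum (n+1) k := by
  rw [anum_pos n k (by omega) (by omega), anum_pos (n+1) k (by omega) (by omega)]
  rw [show n+1-1 = n by omega]
  rcases le_or_gt (2*k) (n+1) with h | h
  · have hp : Nat.choose n (2*k-2) = Nat.choose (n-1) (2*k-3) + Nat.choose (n-1) (2*k-2) := by
      rw [show n = (n-1)+1 by omega, show 2*k-2 = (2*k-3)+1 by omega,
        Nat.choose_succ_succ' (n-1) (2*k-3)]
      congr 2 <;> omega
    rw [hp]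
    try rw [show n+1+1-2*k = (n+1-2*k)+1 by omega]
    try rw [show n+2-2*k = (n+1-2*k)+1 by omega]
    ring
  · rcases eq_or_lt_of_le (show n+2 ≤ 2*k by omega) with h2 | h2
    · rw [Nat.choose_eq_zero_of_lt (show n-1 < 2*k-2 by omega)]
      rw [show 2*k-3 = n-1 by omega, show 2*k-2 = n by omega, Nat.choose_self, Nat.choose_self]
      try rw [show n+2-2*k = 0 by omega]
      try rw [show n+1+1-2*k = 0 by omega]
      ring
    · rw [Nat.choose_eq_zero_of_lt (show n-1 < 2*k-2 by omega),
        Nat.choose_eq_zero_of_lt (show n-1 < 2*k-3 by omega),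
        Nat.choose_eq_zero_of_lt (show n < 2*k-2 by omega)]
      ring

theorem key_num (n k : ℕ) (hn : 1 ≤ n) :
    ∑ ee ∈ antidiagonal n, ∑ qq ∈ antidiagonal k, anum ee.1 qq.1 * anum ee.2 qq.2
      = anum (n+1) k := by
  rw [Finset.Nat.sum_antidiagonal_eq_sum_range_succ_mk]
  have swap1 : ∀ i ∈ range (n+1),
      ∑ qq ∈ antidiagonal k, anum i qq.1 * anum (n-i) qq.2
        = ∑ p ∈ range (k+1), anum i p * anum (n-i) (k-p) := by
    intro i _
    rw [Finset.Nat.sum_antidiagonal_eq_sum_range_succ_mk]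
  rw [Finset.sum_congr rfl swap1, Finset.sum_comm]
  rcases Nat.eq_zero_or_pos k with rfl | hk
  · rw [Finset.sum_range_one]
    simp only [Nat.sub_zero]
    have hz : ∀ i ∈ range (n+1), anum i 0 * anum (n-i) 0 = 0 := by
      intro i hi
      rcases eq_or_ne i 0 with rfl | h
      · rw [Nat.sub_zero, anum_zero, if_pos rfl, one_mul, anum_right_zero,
          if_neg (show n ≠ 0 by omega)]
      · rw [anum_right_zero, if_neg h]
        ring
    rw [Finset.sum_eq_zero hz, anum_right_zero, if_neg (Nat.succ_ne_zero n)]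
  · obtain ⟨k', rfl⟩ : ∃ k', k = k' + 1 := ⟨k - 1, by omega⟩
    rw [Finset.sum_range_succ', Finset.sum_range_succ]
    rw [sum_left_ind n (k'+1-0)]
    have hl : ∑ i ∈ range (n+1), anum i (k'+1) * anum (n-i) (k'+1-(k'+1)) = anum n (k'+1) := by
      rw [Nat.sub_self]
      exact sum_right_ind n (k'+1)
    rw [hl]
    have hmid : ∀ p' ∈ range k',
        ∑ i ∈ range (n+1), anum i (p'+1) * anum (n-i) (k'+1-(p'+1))
          = (2^(n+2-2*(k'+1)) * Nat.choose (n-1) (2*(k'+1)-3))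
              * (catalan p' * catalan (k'-1-p')) := by
      intro p' hp'
      rw [Finset.mem_range] at hp'
      rw [show k'+1-(p'+1) = k'-p' by omega]
      rw [convA (p'+1) (k'-p') n (by omega) (by omega) hn]
      rw [show p'+1+(k'-p') = k'+1 by omega, show p'+1-1 = p' by omega,
        show k'-p'-1 = k'-1-p' by omega]
    rw [Finset.sum_congr rfl hmid, ← Finset.mul_sum]
    have hcat : ∑ p' ∈ range k', catalan p' * catalan (k'-1-p')
        = if k' = 0 then 0 else catalan k' := by
      rcases Nat.eq_zero_or_pos k' with rfl | hk'
      · simp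
      · rw [if_neg (by omega)]
        obtain ⟨k'', rfl⟩ : ∃ k'', k' = k'' + 1 := ⟨k' - 1, by omega⟩
        rw [catalan_succ' k'', Finset.Nat.sum_antidiagonal_eq_sum_range_succ_mk]
        refine Finset.sum_congr rfl fun p' _ => ?_
        rw [show k''+1-1-p' = k''-p' by omega]
    rw [hcat]
    rcases Nat.eq_zero_or_pos k' with rfl | hk'
    · rw [if_pos rfl, mul_zero, zero_add]
      have e1 : (0:ℕ)+1-0 = 0+1 := rfl
      rw [e1]
      rw [anum_pos n (0+1) (by omega) (by omega), anum_pos (n+1) (0+1) (by omega) (by omega)]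
      rw [show 2*(0+1)-2 = 0 by omega, Nat.choose_zero_right, Nat.choose_zero_right]
      try rw [show n+1-2*(0+1) = n-1 by omega]
      try rw [show n+1+1-2*(0+1) = n by omega]
      have h2 : (2:ℕ)^n = 2^(n-1) * 2 := by
        rw [← pow_succ]
        congr 1
        omega
      try rw [show (0:ℕ)+1-1 = 0 by omega]
      try rw [catalan_zero]
      simp only [mul_one]
      omega
    · rw [if_neg (by omega)]
      try rw [show k'+1-0 = k'+1 by omega]
      have hf := final_arith n (k'+1) hn (by omega)
      rw [show k'+1-1 = k' by omega] at hf
      omega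

theorem anum_one (k : ℕ) : anum 1 k = if k = 1 then 1 else 0 := by
  rw [anum]
  rcases eq_or_ne k 1 with rfl | h
  · norm_num
  · rcases Nat.eq_zero_or_pos k with rfl | hk
    · simp
    · rw [if_neg one_ne_zero, if_neg (by omega), if_neg h,
        Nat.choose_eq_zero_of_lt (show 1-1 < 2*k-2 by omega)]
      ring

theorem key0 (k : ℕ) :
    ∑ ee ∈ antidiagonal 0, ∑ qq ∈ antidiagonal k, anum ee.1 qq.1 * anum ee.2 qq.2
      = if k = 1 then 0 else (if k = 0 then 1 else 0) := by
  rw [Finset.Nat.antidiagonal_zero, Finset.sum_singleton,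
    Finset.Nat.sum_antidiagonal_eq_sum_range_succ_mk]
  rcases Nat.eq_zero_or_pos k with rfl | hk
  · simp [anum_zero]
  · have hz : ∀ p ∈ range (k+1), anum 0 p * anum 0 (k-p) = 0 := by
      intro p hp
      rcases eq_or_ne p 0 with rfl | h
      · simp [anum_zero, show k ≠ 0 by omega]
      · simp [anum_zero, h]
    rw [Finset.sum_eq_zero hz]
    rcases eq_or_ne k 1 with rfl | h1
    · simp
    · rw [if_neg h1, if_neg (by omega)]

namespace PlaneTree

noncomputable instance : DecidableEq PlaneTree := Classical.decEq _

theorem edges_node (ts : List PlaneTree) :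
    edges (node ts) = (ts.map (fun t => edges t + 1)).sum := by
  rw [edges]
  induction ts with
  | nil => simp
  | cons a l ih => simp_all

/-- total weight of a list of trees -/
def wt (ts : List PlaneTree) : ℕ := (ts.map (fun t => edges t + 1)).sum

theorem wt_nil : wt [] = 0 := rfl
theorem wt_cons (t : PlaneTree) (ts : List PlaneTree) : wt (t :: ts) = edges t + 1 + wt ts := rfl
theorem edges_node' (ts : List PlaneTree) : edges (node ts) = wt ts := edges_node ts

noncomputable def listsOf : ℕ → Finset (List PlaneTree)
  | 0 => {([] : List PlaneTree)}
  | (r+1) => (Finset.range (r+1)).attach.biUnion (fun e =>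
      (((listsOf e.1).image node) ×ˢ listsOf (r - e.1)).image (fun p => p.1 :: p.2))
decreasing_by
  · have := Finset.mem_range.1 e.2; omega
  · omega

theorem mem_listsOf (r : ℕ) (ts : List PlaneTree) : ts ∈ listsOf r ↔ wt ts = r := by
  induction r using Nat.strong_induction_on generalizing ts with
  | _ r ih =>
    match r with
    | 0 =>
      rw [listsOf]
      constructor
      · intro h; simp at h; simp [h, wt_nil]
      · intro h
        match ts with
        | [] => simp
        | t :: ts => rw [wt_cons] at h; omega
    | (r+1) =>
      rw [listsOf]
      simp only [Finset.mem_biUnion, Finset.mem_attach, Finset.mem_image, Finset.mem_product,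
        true_and, Subtype.exists, Finset.mem_range]
      constructor
      · rintro ⟨e, he, ⟨t, rest⟩, ⟨⟨us, hus, rfl⟩, hrest⟩, rfl⟩
        rw [wt_cons, edges_node', (ih e he us).1 hus, (ih (r-e) (by omega) rest).1 hrest]
        omega
      · intro h
        match ts with
        | [] => simp [wt_nil] at h
        | t :: rest =>
          rw [wt_cons] at h
          refine ⟨edges t, by omega, ⟨t, rest⟩, ⟨?_, ?_⟩, rfl⟩
          · match t with
            | node us =>
              exact ⟨us, (ih (node us).edges (by omega) us).2 (edges_node' us).symm, rfl⟩
          · exact (ih (r - edges t) (by omega) rest).2 (by omega)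
/-- sum of old leaves over a list -/
def os (ts : List PlaneTree) : ℕ := (ts.map oldLeaves).sum

theorem os_nil : os [] = 0 := rfl
theorem os_cons (t : PlaneTree) (ts : List PlaneTree) : os (t :: ts) = oldLeaves t + os ts := rfl

theorem old_node_cons (t : PlaneTree) (ts : List PlaneTree) :
    oldLeaves (node (t :: ts)) = isLeafInd t + oldLeaves t + os ts := by
  rw [oldLeaves]
  congr 1
  unfold os
  induction ts with
  | nil => simp
  | cons a l ih => simp_all

theorem old_node_nil : oldLeaves (node []) = 0 := by rw [oldLeaves]

noncomputable def treesOf (n : ℕ) : Finset PlaneTree := (listsOf n).image node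

theorem node_injective : Function.Injective node := fun a b h => by cases h; rfl

theorem mem_treesOf (n : ℕ) (T : PlaneTree) : T ∈ treesOf n ↔ edges T = n := by
  unfold treesOf
  constructor
  · rintro h
    simp only [Finset.mem_image] at h
    obtain ⟨ts, hts, rfl⟩ := h
    rw [edges_node', (mem_listsOf n ts).1 hts]
  · intro h
    match T with
    | node ts =>
      exact Finset.mem_image.2 ⟨ts, (mem_listsOf n ts).2 (by rw [← edges_node']; exact h), rfl⟩

/-- bounds -/
theorem bounds : ∀ n : ℕ,
    (∀ T : PlaneTree, edges T = n → isLeafInd T + oldLeaves T ≤ n + 1 ∧ oldLeaves T ≤ n) ∧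
    (∀ ts : List PlaneTree, wt ts = n → os ts ≤ n) := by
  intro n
  induction n using Nat.strong_induction_on with
  | _ n ih =>
    constructor
    · rintro ⟨ts⟩ hT
      rw [edges_node'] at hT
      match ts with
      | [] =>
        simp [wt_nil] at hT
        subst hT
        simp [old_node_nil, isLeafInd]
      | t :: rest =>
        rw [wt_cons] at hT
        have h1 : edges t < n := by omega
        have h2 : wt rest < n := by omega
        have ht := ((ih (edges t) h1).1 t rfl).1
        have hr := (ih (wt rest) h2).2 rest rfl
        rw [old_node_cons]
        have : isLeafInd (node (t :: rest)) = 0 := rfl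
        rw [this]
        omega
    · intro ts hts
      match ts with
      | [] => simp [os_nil]
      | t :: rest =>
        rw [wt_cons] at hts
        have h1 : edges t < n := by omega
        have h2 : wt rest < n := by omega
        have ht := (ih (edges t) h1).1 t rfl
        have hr := (ih (wt rest) h2).2 rest rfl
        rw [os_cons]
        omega

theorem old_le_edges (T : PlaneTree) : oldLeaves T ≤ edges T := ((bounds (edges T)).1 T rfl).2
theorem leafold_le (T : PlaneTree) : isLeafInd T + oldLeaves T ≤ edges T + 1 :=
  ((bounds (edges T)).1 T rfl).1
theorem os_le_wt (ts : List PlaneTree) : os ts ≤ wt ts := (bounds (wt ts)).2 ts rfl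

noncomputable def cnum (n k : ℕ) : ℕ := ((treesOf n).filter (fun T => oldLeaves T = k)).card
noncomputable def lnum (r s : ℕ) : ℕ := ((listsOf r).filter (fun ts => os ts = s)).card
noncomputable def dnum (n p : ℕ) : ℕ :=
  ((treesOf n).filter (fun T => isLeafInd T + oldLeaves T = p)).card
def hstat (f : PlaneTree → ℕ) : List PlaneTree → ℕ
  | [] => 0
  | t :: rest => f t + os rest

theorem cons_injective : Function.Injective (fun p : PlaneTree × List PlaneTree => p.1 :: p.2) := by
  rintro ⟨a, b⟩ ⟨c, d⟩ h
  simpa using h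

theorem key (f : PlaneTree → ℕ) (r s : ℕ) :
    ((listsOf (r+1)).filter (fun ts => hstat f ts = s)).card
      = ∑ ee ∈ Finset.HasAntidiagonal.antidiagonal r, ∑ qq ∈ Finset.HasAntidiagonal.antidiagonal s,
          ((treesOf ee.1).filter (fun t => f t = qq.1)).card * lnum ee.2 qq.2 := by
  classical
  set S : (ℕ × ℕ) × (ℕ × ℕ) → Finset (List PlaneTree) := fun x =>
    (((treesOf x.1.1).filter (fun t => f t = x.2.1)) ×ˢ
      ((listsOf x.1.2).filter (fun ts => os ts = x.2.2))).image (fun p => p.1 :: p.2) with hS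
  have hmem : ∀ x ts, ts ∈ S x ↔ ∃ t rest, ts = t :: rest ∧ edges t = x.1.1 ∧ f t = x.2.1 ∧
      wt rest = x.1.2 ∧ os rest = x.2.2 := by
    intro x ts
    simp only [hS, Finset.mem_image, Finset.mem_product, Finset.mem_filter, mem_treesOf,
      mem_listsOf, Prod.exists]
    constructor
    · rintro ⟨t, rest, ⟨⟨h1, h2⟩, h3, h4⟩, rfl⟩
      exact ⟨t, rest, rfl, h1, h2, h3, h4⟩
    · rintro ⟨t, rest, rfl, h1, h2, h3, h4⟩
      exact ⟨t, rest, ⟨⟨h1, h2⟩, h3, h4⟩, rfl⟩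
  have hcover : (listsOf (r+1)).filter (fun ts => hstat f ts = s)
      = ((Finset.HasAntidiagonal.antidiagonal r) ×ˢ (Finset.HasAntidiagonal.antidiagonal s)).biUnion S := by
    ext ts
    simp only [Finset.mem_filter, Finset.mem_biUnion, Finset.mem_product,
      Finset.HasAntidiagonal.mem_antidiagonal, mem_listsOf]
    constructor
    · rintro ⟨hw, hst⟩
      match ts with
      | [] => rw [wt_nil] at hw; omega
      | t :: rest =>
        rw [wt_cons] at hw
        refine ⟨((edges t, wt rest), (f t, os rest)), ⟨by simp; omega, ?_⟩, ?_⟩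
        · show f t + os rest = s
          rw [← hst]; rfl
        · exact (hmem _ _).2 ⟨t, rest, rfl, rfl, rfl, rfl, rfl⟩
    · rintro ⟨x, ⟨hx1, hx2⟩, hts⟩
      obtain ⟨t, rest, rfl, h1, h2, h3, h4⟩ := (hmem _ _).1 hts
      constructor
      · rw [wt_cons]; omega
      · show f t + os rest = s
        omega
  rw [hcover, Finset.card_biUnion]
  · rw [Finset.sum_product]
    refine Finset.sum_congr rfl (fun ee _ => Finset.sum_congr rfl (fun qq _ => ?_))
    rw [hS]
    rw [Finset.card_image_of_injective _ cons_injective, Finset.card_product]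
    rfl
  · rintro x hx y hy hxy
    rw [Function.onFun, Finset.disjoint_left]
    intro ts htsx htsy
    obtain ⟨t, rest, rfl, h1, h2, h3, h4⟩ := (hmem _ _).1 htsx
    obtain ⟨t', rest', heq, h1', h2', h3', h4'⟩ := (hmem _ _).1 htsy
    obtain ⟨rfl, rfl⟩ : t = t' ∧ rest = rest' := by
      constructor <;> [exact (List.cons.injEq _ _ _ _ ▸ heq).1; exact (List.cons.injEq _ _ _ _ ▸ heq).2]
    apply hxy
    have e1 : x.1 = y.1 := Prod.ext (h1.symm.trans h1') (h3.symm.trans h3')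
    have e2 : x.2 = y.2 := Prod.ext (h2.symm.trans h2') (h4.symm.trans h4')
    exact Prod.ext e1 e2
theorem listsOf_zero : listsOf 0 = {([] : List PlaneTree)} := by rw [listsOf]

theorem treesOf_zero : treesOf 0 = {node []} := by
  rw [treesOf, listsOf_zero, Finset.image_singleton]

theorem lnum_zero (s : ℕ) : lnum 0 s = if s = 0 then 1 else 0 := by
  rw [lnum, listsOf_zero]
  by_cases h : s = 0 <;> simp [Finset.filter_singleton, os_nil, h, eq_comm]

theorem cnum_zero (k : ℕ) : cnum 0 k = if k = 0 then 1 else 0 := by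
  rw [cnum, treesOf_zero]
  by_cases h : k = 0 <;> simp [Finset.filter_singleton, old_node_nil, h] <;> omega

theorem dnum_zero (p : ℕ) : dnum 0 p = if p = 1 then 1 else 0 := by
  rw [dnum, treesOf_zero]
  have h1 : isLeafInd (node []) + oldLeaves (node []) = 1 := by rw [old_node_nil, isLeafInd]
  by_cases h : p = 1 <;> simp [Finset.filter_singleton, h1, h] <;> omega

theorem lnum_succ (r s : ℕ) :
    lnum (r+1) s = ∑ ee ∈ Finset.HasAntidiagonal.antidiagonal r, ∑ qq ∈ Finset.HasAntidiagonal.antidiagonal s,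
      cnum ee.1 qq.1 * lnum ee.2 qq.2 := by
  rw [lnum, Finset.filter_congr (q := fun ts => hstat oldLeaves ts = s) ?_, key]
  · rfl
  · intro ts hts
    rw [mem_listsOf] at hts
    match ts with
    | [] => rw [wt_nil] at hts; omega
    | t :: rest => rw [os_cons]; exact Iff.rfl

theorem cnum_succ (r k : ℕ) :
    cnum (r+1) k = ∑ ee ∈ Finset.HasAntidiagonal.antidiagonal r, ∑ qq ∈ Finset.HasAntidiagonal.antidiagonal k,
      dnum ee.1 qq.1 * lnum ee.2 qq.2 := by
  rw [cnum, treesOf, Finset.filter_image, Finset.card_image_of_injective _ node_injective,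
    Finset.filter_congr (q := fun ts => hstat (fun t => isLeafInd t + oldLeaves t) ts = k) ?_, key]
  · rfl
  · intro ts hts
    rw [mem_listsOf] at hts
    match ts with
    | [] => rw [wt_nil] at hts; omega
    | t :: rest => rw [old_node_cons]; exact Iff.rfl

theorem dnum_succ (n p : ℕ) : dnum (n+1) p = cnum (n+1) p := by
  rw [dnum, cnum]
  congr 1
  apply Finset.filter_congr
  intro T hT
  rw [mem_treesOf] at hT
  match T with
  | node ts =>
    rw [edges_node'] at hT
    match ts with
    | [] => rw [wt_nil] at hT; omega
    | t :: rest =>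
      have : isLeafInd (node (t :: rest)) = 0 := rfl
      rw [this, zero_add]

theorem cnum_eq_zero (n k : ℕ) (h : n < k) : cnum n k = 0 := by
  rw [cnum, Finset.card_eq_zero, Finset.filter_eq_empty_iff]
  intro T hT
  rw [mem_treesOf] at hT
  have := old_le_edges T
  omega

theorem lnum_eq_zero (r s : ℕ) (h : r < s) : lnum r s = 0 := by
  rw [lnum, Finset.card_eq_zero, Finset.filter_eq_empty_iff]
  intro ts hts
  rw [mem_listsOf] at hts
  have := os_le_wt ts
  omega

theorem dnum_eq_zero (n p : ℕ) (h : n + 1 < p) : dnum n p = 0 := by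
  rw [dnum, Finset.card_eq_zero, Finset.filter_eq_empty_iff]
  intro T hT
  rw [mem_treesOf] at hT
  have := leafold_le T
  omega

theorem card_eq_cnum (n k : ℕ) :
    Nat.card {T : PlaneTree // T.edges = n ∧ T.oldLeaves = k} = cnum n k := by
  rw [cnum, ← Nat.card_eq_finsetCard]
  apply Nat.card_congr
  apply Equiv.subtypeEquivRight
  intro T
  rw [Finset.mem_filter, mem_treesOf]
noncomputable def cpoly (n : ℕ) : Polynomial ℚ :=
  ∑ k ∈ Finset.range (n+1), Polynomial.C (cnum n k : ℚ) * Polynomial.X ^ k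
noncomputable def lpoly (r : ℕ) : Polynomial ℚ :=
  ∑ s ∈ Finset.range (r+1), Polynomial.C (lnum r s : ℚ) * Polynomial.X ^ s
noncomputable def dpoly (n : ℕ) : Polynomial ℚ :=
  ∑ p ∈ Finset.range (n+2), Polynomial.C (dnum n p : ℚ) * Polynomial.X ^ p

theorem coeff_range_sum (m : ℕ) (f : ℕ → ℚ) (k : ℕ) :
    (∑ i ∈ Finset.range m, Polynomial.C (f i) * Polynomial.X ^ i).coeff k
      = if k < m then f k else 0 := by
  rw [Polynomial.finset_sum_coeff]
  simp only [Polynomial.coeff_C_mul, Polynomial.coeff_X_pow]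
  rw [Finset.sum_congr rfl (fun i _ => by rw [mul_ite, mul_one, mul_zero])]
  rw [Finset.sum_ite_eq (Finset.range m) k f]
  simp [Finset.mem_range]

theorem coeff_cpoly (n k : ℕ) : (cpoly n).coeff k = (cnum n k : ℚ) := by
  rw [cpoly, coeff_range_sum]
  split
  · rfl
  · rw [cnum_eq_zero n k (by omega), Nat.cast_zero]

theorem coeff_lpoly (r s : ℕ) : (lpoly r).coeff s = (lnum r s : ℚ) := by
  rw [lpoly, coeff_range_sum]
  split
  · rfl
  · rw [lnum_eq_zero r s (by omega), Nat.cast_zero]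

theorem coeff_dpoly (n p : ℕ) : (dpoly n).coeff p = (dnum n p : ℚ) := by
  rw [dpoly, coeff_range_sum]
  split
  · rfl
  · rw [dnum_eq_zero n p (by omega), Nat.cast_zero]

noncomputable def CC : PowerSeries (Polynomial ℚ) := PowerSeries.mk cpoly
noncomputable def LL : PowerSeries (Polynomial ℚ) := PowerSeries.mk lpoly
noncomputable def DD : PowerSeries (Polynomial ℚ) := PowerSeries.mk dpoly
noncomputable def YY : PowerSeries (Polynomial ℚ) := PowerSeries.C (R := Polynomial ℚ) Polynomial.X

theorem cpoly_zero : cpoly 0 = 1 := by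
  rw [cpoly]
  simp [cnum_zero]

theorem lpoly_zero : lpoly 0 = 1 := by
  rw [lpoly]
  simp [lnum_zero]

theorem dpoly_zero : dpoly 0 = Polynomial.X := by
  rw [dpoly]
  rw [Finset.sum_range_succ, Finset.sum_range_one]
  simp [dnum_zero]

theorem hA : CC = 1 + PowerSeries.X * (DD * LL) := by
  refine PowerSeries.ext fun n => ?_
  rcases n with _ | n
  · simp [CC, PowerSeries.coeff_mk, cpoly_zero]
  · rw [map_add, PowerSeries.coeff_succ_X_mul, PowerSeries.coeff_mul]
    have h1 : (PowerSeries.coeff (R := Polynomial ℚ) (n+1)) 1 = 0 := by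
      rw [PowerSeries.coeff_one]; simp
    rw [h1, zero_add]
    simp only [CC, DD, LL, PowerSeries.coeff_mk]
    apply Polynomial.ext
    intro k
    rw [coeff_cpoly, Polynomial.finset_sum_coeff]
    simp only [Polynomial.coeff_mul, coeff_dpoly, coeff_lpoly]
    rw [cnum_succ]
    push_cast
    rfl

theorem hB : LL = 1 + PowerSeries.X * (CC * LL) := by
  refine PowerSeries.ext fun n => ?_
  rcases n with _ | n
  · simp [LL, PowerSeries.coeff_mk, lpoly_zero]
  · rw [map_add, PowerSeries.coeff_succ_X_mul, PowerSeries.coeff_mul]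
    have h1 : (PowerSeries.coeff (R := Polynomial ℚ) (n+1)) 1 = 0 := by
      rw [PowerSeries.coeff_one]; simp
    rw [h1, zero_add]
    simp only [CC, LL, PowerSeries.coeff_mk]
    apply Polynomial.ext
    intro s
    rw [coeff_lpoly, Polynomial.finset_sum_coeff]
    simp only [Polynomial.coeff_mul, coeff_cpoly, coeff_lpoly]
    rw [lnum_succ]
    push_cast
    rfl

theorem hC : DD = CC - 1 + YY := by
  refine PowerSeries.ext fun n => ?_
  rcases n with _ | n
  · simp only [DD, CC, YY, PowerSeries.coeff_mk, map_add, map_sub, PowerSeries.coeff_zero_C]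
    rw [dpoly_zero, cpoly_zero]
    have h1 : (PowerSeries.coeff (R := Polynomial ℚ) 0) 1 = 1 := by simp
    rw [h1]
    ring
  · simp only [DD, CC, YY, PowerSeries.coeff_mk, map_add, map_sub]
    have h1 : (PowerSeries.coeff (R := Polynomial ℚ) (n+1)) 1 = 0 := by
      rw [PowerSeries.coeff_one]; simp
    have h2 : (PowerSeries.coeff (R := Polynomial ℚ) (n+1)) (PowerSeries.C (R := Polynomial ℚ) Polynomial.X) = 0 := by
      rw [PowerSeries.coeff_C]; simp
    rw [h1, h2]
    apply Polynomial.ext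
    intro p
    rw [coeff_dpoly, dnum_succ]
    simp [coeff_cpoly]

theorem hQ : CC = 1 + PowerSeries.X * (YY - 1) + PowerSeries.X * CC^2 := by
  linear_combination (1 - PowerSeries.X * CC) * hA + (PowerSeries.X * DD) * hB + PowerSeries.X * hC
theorem cnum_quad (n k : ℕ) :
    (cnum (n+1) k : ℚ)
      = (if n = 0 then ((if k = 1 then (1:ℚ) else 0) - (if k = 0 then 1 else 0)) else 0)
        + ∑ ee ∈ Finset.HasAntidiagonal.antidiagonal n, ∑ qq ∈ Finset.HasAntidiagonal.antidiagonal k,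
            (cnum ee.1 qq.1 : ℚ) * (cnum ee.2 qq.2 : ℚ) := by
  have h2 : (PowerSeries.coeff (R := Polynomial ℚ) (n+1)) CC
      = (PowerSeries.coeff (R := Polynomial ℚ) (n+1)) (1 + PowerSeries.X * (YY - 1) + PowerSeries.X * CC^2) := by
    rw [← hQ]
  rw [map_add, map_add, PowerSeries.coeff_succ_X_mul, PowerSeries.coeff_succ_X_mul] at h2
  have h1 : (PowerSeries.coeff (R := Polynomial ℚ) (n+1)) 1 = 0 := by
    rw [PowerSeries.coeff_one]; simp
  have hy : (PowerSeries.coeff (R := Polynomial ℚ) n) (YY - 1)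
      = if n = 0 then (Polynomial.X - 1) else 0 := by
    rw [map_sub, YY, PowerSeries.coeff_C]
    rcases eq_or_ne n 0 with rfl | hn
    · simp
    · rw [PowerSeries.coeff_one]
      simp [hn]
  rw [h1, hy, zero_add, pow_two, PowerSeries.coeff_mul] at h2
  have h3 := congrArg (fun p => Polynomial.coeff p k) h2
  simp only [Polynomial.coeff_add] at h3
  simp only [CC, PowerSeries.coeff_mk] at h3
  rw [coeff_cpoly] at h3
  rw [h3]
  congr 1
  · rcases eq_or_ne n 0 with rfl | hn
    · simp only [if_true, reduceIte, Polynomial.coeff_sub, Polynomial.coeff_X,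
        Polynomial.coeff_one]
      rcases k with _ | _ | k <;> simp
    · simp [hn]
  · rw [Polynomial.finset_sum_coeff]
    refine Finset.sum_congr rfl fun ee _ => ?_
    rw [Polynomial.coeff_mul]
    refine Finset.sum_congr rfl fun qq _ => ?_
    rw [coeff_cpoly, coeff_cpoly]

theorem cnum_eq_anum (n : ℕ) : ∀ k, cnum n k = anum n k := by
  induction n using Nat.strong_induction_on with
  | _ n ih =>
    match n with
    | 0 =>
      intro k
      rw [cnum_zero, anum_zero]
    | (m+1) =>
      intro k
      have hq := cnum_quad m k
      have hsum : (∑ ee ∈ Finset.HasAntidiagonal.antidiagonal m, ∑ qq ∈ Finset.HasAntidiagonal.antidiagonal k,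
          (cnum ee.1 qq.1 : ℚ) * (cnum ee.2 qq.2 : ℚ))
          = ((∑ ee ∈ Finset.HasAntidiagonal.antidiagonal m, ∑ qq ∈ Finset.HasAntidiagonal.antidiagonal k,
              anum ee.1 qq.1 * anum ee.2 qq.2 : ℕ) : ℚ) := by
        push_cast
        refine Finset.sum_congr rfl fun ee hee => Finset.sum_congr rfl fun qq _ => ?_
        rw [Finset.HasAntidiagonal.mem_antidiagonal] at hee
        rw [ih ee.1 (by omega) qq.1, ih ee.2 (by omega) qq.2]
      rw [hsum] at hq
      rcases Nat.eq_zero_or_pos m with rfl | hm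
      · rw [key0 k] at hq
        rw [anum_one]
        rcases k with _ | _ | k
        · norm_num at hq ⊢
          exact_mod_cast hq
        · norm_num at hq ⊢
          exact_mod_cast hq
        · norm_num at hq ⊢
          exact_mod_cast hq
      · rw [if_neg (by omega), key_num m k hm, zero_add] at hq
        exact_mod_cast hq

end PlaneTree

/-- The number of plane trees with `n` edges and `k` old leaves is
`(2^(n-2k+1)/k)·C(n-1,2k-2)·C(2k-2,k-1)`. -/
theorem card_planeTrees_old (n k : ℕ) (hn : 1 ≤ n) (hk : 1 ≤ k) :
    (Nat.card {T : PlaneTree // T.edges = n ∧ T.oldLeaves = k} : ℚ) =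
      (2 ^ (n + 1 - 2 * k) / k) * (n - 1).choose (2 * k - 2) * (2 * k - 2).choose (k - 1) := by
  rw [PlaneTree.card_eq_cnum, PlaneTree.cnum_eq_anum]
  rw [anum, if_neg (by omega), if_neg (by omega)]
  have hc : (((2*k-2).choose (k-1) : ℕ) : ℚ) = (k : ℚ) * catalan (k-1) := by
    have h1 := succ_mul_catalan_eq_centralBinom (k-1)
    rw [Nat.centralBinom_eq_two_mul_choose] at h1
    rw [show 2*(k-1) = 2*k-2 by omega, show k-1+1 = k by omega] at h1
    exact_mod_cast h1.symm
  have hk0 : (k : ℚ) ≠ 0 := Nat.cast_ne_zero.2 (by omega)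
  push_cast
  rw [hc]
  field_simp
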